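/- Let V be a finite-dimensional real inner product space, let L : V → V be a self-adjoint linear operator that is positive semi-definite (⟨L(v), v⟩ ≥ 0 for all v ∈ V), and let W ⊆ V be a subspace. Then for every w ∈ W there exists w' in the orthogonal complement W^⊥ of W such that L(w + w') ∈ W. -/

import Mathlib

open scoped RealInnerProductSpace

lemma psd_inner_self_zero
    {V : Type*} [NormedAddCommGroup V] [InnerProductSpace ℝ V]
    (L : V →ₗ[ℝ] V)
    (hsa : ∀ u v : V, ⟪L u, v⟫ = ⟪u, L v⟫)
    (hpsd : ∀ v : V, 0 ≤ ⟪L v, v⟫)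
    {v : V} (hv : ⟪L v, v⟫ = 0) : L v = 0 := by
  set a : ℝ := ⟪L (L v), L v⟫ with ha
  set b : ℝ := ⟪L v, L v⟫ with hb
  have ha0 : 0 ≤ a := hpsd _
  have hb0 : 0 ≤ b := real_inner_self_nonneg
  have key : ∀ t : ℝ, 0 ≤ a * t ^ 2 + 2 * b * t := by
    intro t
    have h := hpsd (v + t • L v)
    rw [map_add, map_smul] at h
    rw [inner_add_left, inner_add_right, inner_add_right] at h
    rw [real_inner_smul_left, real_inner_smul_right, real_inner_smul_left,
      real_inner_smul_right] at h
    have hsym : ⟪L (L v), v⟫ = b := by rw [hsa]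
    rw [hsym, hv] at h
    nlinarith [h]
  have hbz : b = 0 := by
    have h := key (-(b / (a + 1)))
    have hpos : (0:ℝ) < a + 1 := by linarith
    have h2 : 0 ≤ a * (b / (a + 1)) ^ 2 - 2 * b * (b / (a + 1)) := by nlinarith [h]
    have h3 : 0 ≤ (a * (b / (a + 1)) ^ 2 - 2 * b * (b / (a + 1))) * (a + 1) ^ 2 :=
      mul_nonneg h2 (by positivity)
    have hfield : (a * (b / (a + 1)) ^ 2 - 2 * b * (b / (a + 1))) * (a + 1) ^ 2
        = a * b ^ 2 - 2 * b ^ 2 * (a + 1) := by field_simp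
    rw [hfield] at h3
    nlinarith [sq_nonneg b]
  have : ⟪L v, L v⟫ = 0 := hbz
  exact inner_self_eq_zero.mp this

/-- For a self-adjoint positive semi-definite operator `L` on a finite-dimensional real
inner product space `V` and a subspace `W ⊆ V`, every `w ∈ W` admits `w' ∈ Wᗮ` such that
`L (w + w') ∈ W`. -/
theorem exists_perp_correction
    {V : Type*} [NormedAddCommGroup V] [InnerProductSpace ℝ V] [FiniteDimensional ℝ V]
    (L : V →ₗ[ℝ] V)
    (hsa : ∀ u v : V, ⟪L u, v⟫ = ⟪u, L v⟫)
    (hpsd : ∀ v : V, 0 ≤ ⟪L v, v⟫)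
    (W : Submodule ℝ V) :
    ∀ w ∈ W, ∃ w' ∈ Wᗮ, L (w + w') ∈ W := by
  intro w hw
  set K := Wᗮ with hK
  set T : K →ₗ[ℝ] K :=
    (Submodule.orthogonalProjectionOnto K).toLinearMap ∘ₗ (L ∘ₗ K.subtype) with hT
  have hTapply : ∀ x : K, T x = Submodule.orthogonalProjectionOnto K (L (x : V)) := fun _ => rfl
  have hTinner : ∀ x y : K, ⟪T x, y⟫ = ⟪L (x : V), (y : V)⟫ := by
    intro x y
    rw [hTapply]
    exact Submodule.inner_orthogonalProjectionOnto_eq_of_mem_right (K := K) y (L (x : V))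
  have hTsymm : ∀ x y : K, ⟪T x, y⟫ = ⟪T y, x⟫ := by
    intro x y
    rw [hTinner, hTinner, hsa, real_inner_comm]
  -- range T = (ker T)ᗮ
  have hle : LinearMap.range T ≤ (LinearMap.ker T)ᗮ := by
    rintro _ ⟨x, rfl⟩ y hy
    have hy0 : T y = 0 := hy
    rw [real_inner_comm, hTsymm, hy0, inner_zero_left]
  have heq : LinearMap.range T = (LinearMap.ker T)ᗮ := by
    apply Submodule.eq_of_le_of_finrank_eq hle
    have h1 := LinearMap.finrank_range_add_finrank_ker T
    have h2 := (LinearMap.ker T).finrank_add_finrank_orthogonal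
    omega
  -- the element proj_K (L w) is orthogonal to ker T
  have hmem : (-(Submodule.orthogonalProjectionOnto K (L w)) : K) ∈ (LinearMap.ker T)ᗮ := by
    apply Submodule.neg_mem
    intro y hy
    have hy0 : T y = 0 := hy
    have hLy0 : L (y : V) = 0 := by
      apply psd_inner_self_zero L hsa hpsd
      have : ⟪T y, y⟫ = 0 := by rw [hy0]; simp
      rw [hTinner] at this
      exact this
    have : ⟪Submodule.orthogonalProjectionOnto K (L w), y⟫ = ⟪L w, (y : V)⟫ :=
      Submodule.inner_orthogonalProjectionOnto_eq_of_mem_right (K := K) y (L w)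
    rw [real_inner_comm, this, hsa, hLy0, inner_zero_right]
  rw [← heq] at hmem
  obtain ⟨x, hx⟩ := hmem
  refine ⟨(x : V), x.2, ?_⟩
  -- show L (w + x) ∈ W using W = Kᗮ
  have hWK : Kᗮ = W := Submodule.orthogonal_orthogonal W
  rw [← hWK, ← Submodule.orthogonalProjectionOnto_eq_zero_iff (K := K)]
  rw [map_add]
  have hxproj : Submodule.orthogonalProjectionOnto K (L (x : V)) = T x := rfl
  rw [map_add, hxproj, hx]
  simp
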